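/- Let G = (V, E) be the 2-dimensional rectangle grid graph with m rows and n columns, and let G' = (V, E ∪ {e}) where e is an edge added between any two non-adjacent vertices of V. Then the set {P, Q, R, S} of the four corners of the grid is a resolving set of G', and consequently β(G') ≤ 4. -/

import Mathlib

/-- A set `R` of vertices resolves the graph `H` if every pair of distinct
vertices is distinguished by some vertex of `R`. -/
def resolves {V : Type*} (H : SimpleGraph V) (R : Set V) : Prop :=
  ∀ a b : V, a ≠ b → ∃ x ∈ R, H.dist a x ≠ H.dist b x

/-- The metric dimension: the least cardinality of a (finite) resolving set. -/
noncomputable def metricDim {V : Type*} (H : SimpleGraph V) : ℕ :=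
  sInf {k | ∃ R : Finset V, R.card = k ∧ resolves H (R : Set V)}

/-- The rectangle grid graph with `n` columns and `m` rows: the vertex `(i, j)`
(with `i : Fin n`, `j : Fin m`) represents the grid point in column `i + 1` and row
`j + 1`; two vertices are adjacent when they differ by exactly 1 in exactly one
coordinate, i.e. when their ℓ¹ distance is 1. -/
def grid2 (n m : ℕ) : SimpleGraph (Fin n × Fin m) where
  Adj a b := |((a.1 : ℕ) : ℤ) - ((b.1 : ℕ) : ℤ)| + |((a.2 : ℕ) : ℤ) - ((b.2 : ℕ) : ℤ)| = 1
  symm := by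
    constructor
    intro a b h
    rw [abs_sub_comm ((b.1 : ℕ) : ℤ), abs_sub_comm ((b.2 : ℕ) : ℤ)]
    exact h
  loopless := by constructor; intro a h; simp at h


set_option maxHeartbeats 2000000

namespace Stmt12Aux

lemma collapse' (PA PE PF a b : ℤ)
    (h5 : PA - PF ≤ b) (hn1 : PF ≤ PE) :
    min PA (min (a+1+PF) (b+1+PE)) = min PA (a+1+PF) := by omega

lemma core_norm (T PA QA RA SA PB QB RB SB PE QE RE SE PF QF RF SF a b c d g : ℤ)
  (hA : PA + RA = T ∧ QA + SA = T) (hB : PB + RB = T ∧ QB + SB = T)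
  (hE : PE + RE = T ∧ QE + SE = T) (hF : PF + RF = T ∧ QF + SF = T)
  (taP : PA - PE ≤ a ∧ PE - PA ≤ a) (taQ : QA - QE ≤ a ∧ QE - QA ≤ a)
  (tbP : PA - PF ≤ b ∧ PF - PA ≤ b) (tbQ : QA - QF ≤ b ∧ QF - QA ≤ b)
  (tcP : PB - PE ≤ c ∧ PE - PB ≤ c) (tcQ : QB - QE ≤ c ∧ QE - QB ≤ c)
  (tdP : PB - PF ≤ d ∧ PF - PB ≤ d) (tdQ : QB - QF ≤ d ∧ QF - QB ≤ d)
  (hab : g ≤ a + b) (hcd : g ≤ c + d)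
  (hgP : PE - PF ≤ g ∧ PF - PE ≤ g) (hgQ : QE - QF ≤ g ∧ QF - QE ≤ g)
  (hn1 : PF ≤ PE) (hn2 : QF ≤ QE)
  (hP : min PA (min (a+1+PF) (b+1+PE)) = min PB (min (c+1+PF) (d+1+PE)))
  (hQ : min QA (min (a+1+QF) (b+1+QE)) = min QB (min (c+1+QF) (d+1+QE)))
  (hR : min RA (min (a+1+RF) (b+1+RE)) = min RB (min (c+1+RF) (d+1+RE)))
  (hS : min SA (min (a+1+SF) (b+1+SE)) = min SB (min (c+1+SF) (d+1+SE)))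
  : PA = PB ∧ QA = QB := by
  have eRA : RA = T - PA := by clear hP hQ hR hS; omega
  have eSA : SA = T - QA := by clear hP hQ hR hS; omega
  have eRB : RB = T - PB := by clear hP hQ hR hS; omega
  have eSB : SB = T - QB := by clear hP hQ hR hS; omega
  have eRE : RE = T - PE := by clear hP hQ hR hS; omega
  have eSE : SE = T - QE := by clear hP hQ hR hS; omega
  have eRF : RF = T - PF := by clear hP hQ hR hS; omega
  have eSF : SF = T - QF := by clear hP hQ hR hS; omega
  subst eRA eSA eRB eSB eRE eSE eRF eSF
  rw [collapse' PA PE PF a b tbP.1 hn1, collapse' PB PE PF c d tdP.1 hn1] at hP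
  rw [collapse' QA QE QF a b tbQ.1 hn2, collapse' QB QE QF c d tdQ.1 hn2] at hQ
  rw [min_comm (a+1+(T-PF)) (b+1+(T-PE)),
      collapse' (T-PA) (T-PF) (T-PE) b a (by clear hP hQ hR hS; omega) (by clear hP hQ hR hS; omega),
      min_comm (c+1+(T-PF)) (d+1+(T-PE)),
      collapse' (T-PB) (T-PF) (T-PE) d c (by clear hP hQ hR hS; omega) (by clear hP hQ hR hS; omega)] at hR
  rw [min_comm (a+1+(T-QF)) (b+1+(T-QE)),
      collapse' (T-QA) (T-QF) (T-QE) b a (by clear hP hQ hR hS; omega) (by clear hP hQ hR hS; omega),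
      min_comm (c+1+(T-QF)) (d+1+(T-QE)),
      collapse' (T-QB) (T-QF) (T-QE) d c (by clear hP hQ hR hS; omega) (by clear hP hQ hR hS; omega)] at hS
  omega

lemma core (T PA QA RA SA PB QB RB SB PE QE RE SE PF QF RF SF a b c d g : ℤ)
  (hA : PA + RA = T ∧ QA + SA = T) (hB : PB + RB = T ∧ QB + SB = T)
  (hE : PE + RE = T ∧ QE + SE = T) (hF : PF + RF = T ∧ QF + SF = T)
  (taP : PA - PE ≤ a ∧ PE - PA ≤ a) (taQ : QA - QE ≤ a ∧ QE - QA ≤ a)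
  (tbP : PA - PF ≤ b ∧ PF - PA ≤ b) (tbQ : QA - QF ≤ b ∧ QF - QA ≤ b)
  (tcP : PB - PE ≤ c ∧ PE - PB ≤ c) (tcQ : QB - QE ≤ c ∧ QE - QB ≤ c)
  (tdP : PB - PF ≤ d ∧ PF - PB ≤ d) (tdQ : QB - QF ≤ d ∧ QF - QB ≤ d)
  (hab : g ≤ a + b) (hcd : g ≤ c + d)
  (hgP : PE - PF ≤ g ∧ PF - PE ≤ g) (hgQ : QE - QF ≤ g ∧ QF - QE ≤ g)
  (hP : min PA (min (a+1+PF) (b+1+PE)) = min PB (min (c+1+PF) (d+1+PE)))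
  (hQ : min QA (min (a+1+QF) (b+1+QE)) = min QB (min (c+1+QF) (d+1+QE)))
  (hR : min RA (min (a+1+RF) (b+1+RE)) = min RB (min (c+1+RF) (d+1+RE)))
  (hS : min SA (min (a+1+SF) (b+1+SE)) = min SB (min (c+1+SF) (d+1+SE)))
  : PA = PB ∧ QA = QB := by
  have hgS : SE - SF ≤ g ∧ SF - SE ≤ g := by clear hP hQ hR hS; omega
  rcases le_total PF PE with hpe | hpe <;> rcases le_total QF QE with hqe | hqe
  · exact core_norm T PA QA RA SA PB QB RB SB PE QE RE SE PF QF RF SF a b c d g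
      hA hB hE hF taP taQ tbP tbQ tcP tcQ tdP tdQ hab hcd hgP hgQ hpe hqe hP hQ hR hS
  · -- swap Q ↔ S
    have taS : SA - SE ≤ a ∧ SE - SA ≤ a := by clear hP hQ hR hS; omega
    have tbS : SA - SF ≤ b ∧ SF - SA ≤ b := by clear hP hQ hR hS; omega
    have tcS : SB - SE ≤ c ∧ SE - SB ≤ c := by clear hP hQ hR hS; omega
    have tdS : SB - SF ≤ d ∧ SF - SB ≤ d := by clear hP hQ hR hS; omega
    obtain ⟨r1, r2⟩ := core_norm T PA SA RA QA PB SB RB QB PE SE RE QE PF SF RF QF a b c d g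
      ⟨hA.1, by clear hP hQ hR hS; omega⟩ ⟨hB.1, by clear hP hQ hR hS; omega⟩
      ⟨hE.1, by clear hP hQ hR hS; omega⟩ ⟨hF.1, by clear hP hQ hR hS; omega⟩
      taP taS tbP tbS tcP tcS tdP tdS hab hcd hgP hgS hpe (by clear hP hQ hR hS; omega)
      hP hS hR hQ
    exact ⟨r1, by clear hP hQ hR hS; omega⟩
  · -- swap E ↔ F and Q ↔ S
    have taS : SA - SE ≤ a ∧ SE - SA ≤ a := by clear hP hQ hR hS; omega
    have tbS : SA - SF ≤ b ∧ SF - SA ≤ b := by clear hP hQ hR hS; omega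
    have tcS : SB - SE ≤ c ∧ SE - SB ≤ c := by clear hP hQ hR hS; omega
    have tdS : SB - SF ≤ d ∧ SF - SB ≤ d := by clear hP hQ hR hS; omega
    obtain ⟨r1, r2⟩ := core_norm T PA SA RA QA PB SB RB QB PF SF RF QF PE SE RE QE b a d c g
      ⟨hA.1, by clear hP hQ hR hS; omega⟩ ⟨hB.1, by clear hP hQ hR hS; omega⟩
      ⟨hF.1, by clear hP hQ hR hS; omega⟩ ⟨hE.1, by clear hP hQ hR hS; omega⟩
      tbP tbS taP taS tdP tdS tcP tcS (by clear hP hQ hR hS; omega) (by clear hP hQ hR hS; omega)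
      ⟨hgP.2, hgP.1⟩ ⟨hgS.2, hgS.1⟩ hpe (by clear hP hQ hR hS; omega)
      (by rw [min_comm (b+1+PE) (a+1+PF), min_comm (d+1+PE) (c+1+PF)]; exact hP)
      (by rw [min_comm (b+1+SE) (a+1+SF), min_comm (d+1+SE) (c+1+SF)]; exact hS)
      (by rw [min_comm (b+1+RE) (a+1+RF), min_comm (d+1+RE) (c+1+RF)]; exact hR)
      (by rw [min_comm (b+1+QE) (a+1+QF), min_comm (d+1+QE) (c+1+QF)]; exact hQ)
    exact ⟨r1, by clear hP hQ hR hS; omega⟩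
  · -- swap E ↔ F
    obtain ⟨r1, r2⟩ := core_norm T PA QA RA SA PB QB RB SB PF QF RF SF PE QE RE SE b a d c g
      hA hB hF hE tbP tbQ taP taQ tdP tdQ tcP tcQ
      (by clear hP hQ hR hS; omega) (by clear hP hQ hR hS; omega)
      ⟨hgP.2, hgP.1⟩ ⟨hgQ.2, hgQ.1⟩ hpe hqe
      (by rw [min_comm (b+1+PE) (a+1+PF), min_comm (d+1+PE) (c+1+PF)]; exact hP)
      (by rw [min_comm (b+1+QE) (a+1+QF), min_comm (d+1+QE) (c+1+QF)]; exact hQ)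
      (by rw [min_comm (b+1+RE) (a+1+RF), min_comm (d+1+RE) (c+1+RF)]; exact hR)
      (by rw [min_comm (b+1+SE) (a+1+SF), min_comm (d+1+SE) (c+1+SF)]; exact hS)
    exact ⟨r1, r2⟩


variable {n m : ℕ}

def gd (a b : Fin n × Fin m) : ℕ :=
  (((a.1 : ℕ) : ℤ) - ((b.1 : ℕ) : ℤ)).natAbs + (((a.2 : ℕ) : ℤ) - ((b.2 : ℕ) : ℤ)).natAbs

lemma gd_self (a : Fin n × Fin m) : gd a a = 0 := by simp [gd]

lemma gd_comm (a b : Fin n × Fin m) : gd a b = gd b a := by simp [gd]; omega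

lemma gd_triangle (a b c : Fin n × Fin m) : gd a c ≤ gd a b + gd b c := by simp [gd]; omega

lemma gd_eq_zero {a b : Fin n × Fin m} (h : gd a b = 0) : a = b := by
  simp only [gd] at h
  have h1 : (a.1 : ℕ) = (b.1 : ℕ) := by omega
  have h2 : (a.2 : ℕ) = (b.2 : ℕ) := by omega
  exact Prod.ext (Fin.ext h1) (Fin.ext h2)

lemma adj_iff_gd {a b : Fin n × Fin m} : (grid2 n m).Adj a b ↔ gd a b = 1 := by
  show (|((a.1 : ℕ) : ℤ) - ((b.1 : ℕ) : ℤ)| + |((a.2 : ℕ) : ℤ) - ((b.2 : ℕ) : ℤ)| = 1) ↔ _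
  rw [Int.abs_eq_natAbs, Int.abs_eq_natAbs]
  simp only [gd]
  omega

lemma exists_walk_gd : ∀ (k : ℕ) (a b : Fin n × Fin m), gd a b = k →
    ∃ w : (grid2 n m).Walk a b, w.length = k := by
  intro k
  induction k with
  | zero =>
    intro a b h
    obtain rfl := gd_eq_zero h
    exact ⟨SimpleGraph.Walk.nil, rfl⟩
  | succ k ih =>
    intro a b h
    -- find a neighbor of a strictly closer to b
    have hne : ¬ ((a.1 : ℕ) = (b.1 : ℕ) ∧ (a.2 : ℕ) = (b.2 : ℕ)) := by
      rintro ⟨h1, h2⟩; simp [gd, h1, h2] at h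
    have key : ∃ c : Fin n × Fin m, (grid2 n m).Adj a c ∧ gd c b = k := by
      rcases Nat.lt_trichotomy (a.1 : ℕ) (b.1 : ℕ) with h1 | h1 | h1
      · refine ⟨(⟨(a.1 : ℕ) + 1, lt_of_le_of_lt h1 b.1.isLt⟩, a.2), ?_, ?_⟩
        · rw [adj_iff_gd]; simp only [gd, Fin.val_mk]; omega
        · simp only [gd, Fin.val_mk] at h ⊢; omega
      · rcases Nat.lt_trichotomy (a.2 : ℕ) (b.2 : ℕ) with h2 | h2 | h2
        · refine ⟨(a.1, ⟨(a.2 : ℕ) + 1, lt_of_le_of_lt h2 b.2.isLt⟩), ?_, ?_⟩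
          · rw [adj_iff_gd]; simp only [gd, Fin.val_mk]; omega
          · simp only [gd, Fin.val_mk] at h ⊢; omega
        · exact absurd ⟨h1, h2⟩ hne
        · refine ⟨(a.1, ⟨(a.2 : ℕ) - 1, lt_of_le_of_lt (Nat.sub_le _ _) a.2.isLt⟩), ?_, ?_⟩
          · rw [adj_iff_gd]; simp only [gd, Fin.val_mk]; omega
          · simp only [gd, Fin.val_mk] at h ⊢; omega
      · refine ⟨(⟨(a.1 : ℕ) - 1, lt_of_le_of_lt (Nat.sub_le _ _) a.1.isLt⟩, a.2), ?_, ?_⟩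
        · rw [adj_iff_gd]; simp only [gd, Fin.val_mk]; omega
        · simp only [gd, Fin.val_mk] at h ⊢; omega
    obtain ⟨c, hadj, hc⟩ := key
    obtain ⟨w, hw⟩ := ih c b hc
    exact ⟨SimpleGraph.Walk.cons hadj w, by simp [hw]⟩

lemma gd_le_length {a b : Fin n × Fin m} (w : (grid2 n m).Walk a b) : gd a b ≤ w.length := by
  induction w with
  | nil => simp [gd_self]
  | @cons u v w h p ih =>
    have h1 := adj_iff_gd.mp h
    have h2 := gd_triangle u v w
    simp only [SimpleGraph.Walk.length_cons]
    omega

lemma grid_dist_eq (a b : Fin n × Fin m) : (grid2 n m).dist a b = gd a b := by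
  obtain ⟨w, hw⟩ := exists_walk_gd (gd a b) a b rfl
  refine le_antisymm (hw ▸ SimpleGraph.dist_le w) ?_
  obtain ⟨p, hp⟩ := SimpleGraph.Reachable.exists_walk_length_eq_dist ⟨w⟩
  rw [← hp]
  exact gd_le_length p

section Gprime
variable (E F : Fin n × Fin m) (hne : E ≠ F)
  (G' : SimpleGraph (Fin n × Fin m))
  (hG' : G' = grid2 n m ⊔ SimpleGraph.fromEdgeSet {s(E, F)})

include hG' hne

lemma le_G' : grid2 n m ≤ G' := hG' ▸ le_sup_left

lemma adj_EF : G'.Adj E F := by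
  rw [hG', SimpleGraph.sup_adj, SimpleGraph.fromEdgeSet_adj]
  exact Or.inr ⟨Set.mem_singleton _, hne⟩

lemma min3_le_length : ∀ {x y : Fin n × Fin m} (w : G'.Walk x y),
    min (gd x y) (min (gd x E + 1 + gd F y) (gd x F + 1 + gd E y)) ≤ w.length := by
  intro x y w
  induction w with
  | nil => simp [gd_self]
  | @cons u v w h p ih =>
    rw [hG', SimpleGraph.sup_adj, SimpleGraph.fromEdgeSet_adj] at h
    simp only [SimpleGraph.Walk.length_cons]
    rcases h with h | ⟨h, hne'⟩
    · have h1 := adj_iff_gd.mp h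
      have t1 := gd_triangle u v w
      have t2 := gd_triangle u v E
      have t3 := gd_triangle u v F
      omega
    · simp only [Set.mem_singleton_iff, Sym2.eq_iff] at h
      have g1 := gd_self E
      have g2 := gd_self F
      have g3 := gd_comm E F
      rcases h with ⟨rfl, rfl⟩ | ⟨rfl, rfl⟩ <;> omega

lemma dist_G' (a b : Fin n × Fin m) :
    G'.dist a b = min (gd a b) (min (gd a E + 1 + gd F b) (gd a F + 1 + gd E b)) := by
  have hle := le_G' E F hne G' hG'
  refine le_antisymm (le_min ?_ (le_min ?_ ?_)) ?_
  · obtain ⟨w, hw⟩ := exists_walk_gd (gd a b) a b rfl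
    calc G'.dist a b ≤ (w.mapLe hle).length := SimpleGraph.dist_le _
    _ = gd a b := by rw [SimpleGraph.Walk.length_map, hw]
  · obtain ⟨w1, hw1⟩ := exists_walk_gd (gd a E) a E rfl
    obtain ⟨w2, hw2⟩ := exists_walk_gd (gd F b) F b rfl
    have := SimpleGraph.dist_le ((w1.mapLe hle).append
      (SimpleGraph.Walk.cons (adj_EF E F hne G' hG') (w2.mapLe hle)))
    simp [SimpleGraph.Walk.length_append, SimpleGraph.Walk.length_cons, SimpleGraph.Walk.length_map, hw1, hw2] at this
    omega
  · obtain ⟨w1, hw1⟩ := exists_walk_gd (gd a F) a F rfl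
    obtain ⟨w2, hw2⟩ := exists_walk_gd (gd E b) E b rfl
    have := SimpleGraph.dist_le ((w1.mapLe hle).append
      (SimpleGraph.Walk.cons ((adj_EF E F hne G' hG').symm) (w2.mapLe hle)))
    simp [SimpleGraph.Walk.length_append, SimpleGraph.Walk.length_cons, SimpleGraph.Walk.length_map, hw1, hw2] at this
    omega
  · have reach : G'.Reachable a b := by
      obtain ⟨w, _⟩ := exists_walk_gd (gd a b) a b rfl
      exact ⟨w.mapLe hle⟩
    obtain ⟨p, hp⟩ := reach.exists_walk_length_eq_dist
    rw [← hp]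
    exact min3_le_length E F hne G' hG' p


lemma resolve_key (hn : 0 < n) (hm : 0 < m) (hEF2 : 2 ≤ gd E F) (A B : Fin n × Fin m)
    (h1 : G'.dist A (⟨0, hn⟩, ⟨0, hm⟩) = G'.dist B (⟨0, hn⟩, ⟨0, hm⟩))
    (h2 : G'.dist A (⟨n - 1, Nat.sub_lt hn one_pos⟩, ⟨0, hm⟩)
        = G'.dist B (⟨n - 1, Nat.sub_lt hn one_pos⟩, ⟨0, hm⟩))
    (h3 : G'.dist A (⟨n - 1, Nat.sub_lt hn one_pos⟩, ⟨m - 1, Nat.sub_lt hm one_pos⟩)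
        = G'.dist B (⟨n - 1, Nat.sub_lt hn one_pos⟩, ⟨m - 1, Nat.sub_lt hm one_pos⟩))
    (h4 : G'.dist A (⟨0, hn⟩, ⟨m - 1, Nat.sub_lt hm one_pos⟩)
        = G'.dist B (⟨0, hn⟩, ⟨m - 1, Nat.sub_lt hm one_pos⟩)) : A = B := by
  simp only [dist_G' E F hne G' hG'] at h1 h2 h3 h4
  zify at h1 h2 h3 h4
  have bA1 := A.1.isLt; have bA2 := A.2.isLt
  have bB1 := B.1.isLt; have bB2 := B.2.isLt
  have bE1 := E.1.isLt; have bE2 := E.2.isLt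
  have bF1 := F.1.isLt; have bF2 := F.2.isLt
  have hgEF : (2 : ℤ) ≤ (gd E F : ℤ) := by exact_mod_cast hEF2
  obtain ⟨e1, e2⟩ := core (((n:ℤ)-1) + ((m:ℤ)-1))
    (gd A (⟨0, hn⟩, ⟨0, hm⟩)) (gd A (⟨n - 1, Nat.sub_lt hn one_pos⟩, ⟨0, hm⟩))
    (gd A (⟨n - 1, Nat.sub_lt hn one_pos⟩, ⟨m - 1, Nat.sub_lt hm one_pos⟩))
    (gd A (⟨0, hn⟩, ⟨m - 1, Nat.sub_lt hm one_pos⟩))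
    (gd B (⟨0, hn⟩, ⟨0, hm⟩)) (gd B (⟨n - 1, Nat.sub_lt hn one_pos⟩, ⟨0, hm⟩))
    (gd B (⟨n - 1, Nat.sub_lt hn one_pos⟩, ⟨m - 1, Nat.sub_lt hm one_pos⟩))
    (gd B (⟨0, hn⟩, ⟨m - 1, Nat.sub_lt hm one_pos⟩))
    (gd E (⟨0, hn⟩, ⟨0, hm⟩)) (gd E (⟨n - 1, Nat.sub_lt hn one_pos⟩, ⟨0, hm⟩))
    (gd E (⟨n - 1, Nat.sub_lt hn one_pos⟩, ⟨m - 1, Nat.sub_lt hm one_pos⟩))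
    (gd E (⟨0, hn⟩, ⟨m - 1, Nat.sub_lt hm one_pos⟩))
    (gd F (⟨0, hn⟩, ⟨0, hm⟩)) (gd F (⟨n - 1, Nat.sub_lt hn one_pos⟩, ⟨0, hm⟩))
    (gd F (⟨n - 1, Nat.sub_lt hn one_pos⟩, ⟨m - 1, Nat.sub_lt hm one_pos⟩))
    (gd F (⟨0, hn⟩, ⟨m - 1, Nat.sub_lt hm one_pos⟩))
    (gd A E) (gd A F) (gd B E) (gd B F) (gd E F)
    (by constructor <;> (simp only [gd, Fin.val_mk]; omega))
    (by constructor <;> (simp only [gd, Fin.val_mk]; omega))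
    (by constructor <;> (simp only [gd, Fin.val_mk]; omega))
    (by constructor <;> (simp only [gd, Fin.val_mk]; omega))
    (by constructor <;> (simp only [gd, Fin.val_mk]; omega))
    (by constructor <;> (simp only [gd, Fin.val_mk]; omega))
    (by constructor <;> (simp only [gd, Fin.val_mk]; omega))
    (by constructor <;> (simp only [gd, Fin.val_mk]; omega))
    (by constructor <;> (simp only [gd, Fin.val_mk]; omega))
    (by constructor <;> (simp only [gd, Fin.val_mk]; omega))
    (by constructor <;> (simp only [gd, Fin.val_mk]; omega))
    (by constructor <;> (simp only [gd, Fin.val_mk]; omega))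
    (by simp only [gd, Fin.val_mk]; omega)
    (by simp only [gd, Fin.val_mk]; omega)
    (by constructor <;> (simp only [gd, Fin.val_mk]; omega))
    (by constructor <;> (simp only [gd, Fin.val_mk]; omega))
    h1 h2 h3 h4
  simp only [gd, Fin.val_mk] at e1 e2
  have hx : (A.1 : ℕ) = (B.1 : ℕ) := by omega
  have hy : (A.2 : ℕ) = (B.2 : ℕ) := by omega
  exact Prod.ext (Fin.ext hx) (Fin.ext hy)

end Gprime
end Stmt12Aux

theorem stmt_12 {m n : ℕ} (hn : 0 < n) (hm : 0 < m)
    (E F : Fin n × Fin m) (hne : E ≠ F) (hadj : ¬ (grid2 n m).Adj E F)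
    (G' : SimpleGraph (Fin n × Fin m))
    (hG' : G' = grid2 n m ⊔ SimpleGraph.fromEdgeSet {s(E, F)}) :
    resolves G'
      {(⟨0, hn⟩, ⟨0, hm⟩),
       (⟨n - 1, Nat.sub_lt hn one_pos⟩, ⟨0, hm⟩),
       (⟨n - 1, Nat.sub_lt hn one_pos⟩, ⟨m - 1, Nat.sub_lt hm one_pos⟩),
       (⟨0, hn⟩, ⟨m - 1, Nat.sub_lt hm one_pos⟩)} ∧
    metricDim G' ≤ 4 := by
  have hEF2 : 2 ≤ Stmt12Aux.gd E F := by
    have h0 : Stmt12Aux.gd E F ≠ 0 := fun hh => hne (Stmt12Aux.gd_eq_zero hh)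
    have h1 : Stmt12Aux.gd E F ≠ 1 := fun hh => hadj (Stmt12Aux.adj_iff_gd.mpr hh)
    omega
  have hres : resolves G'
      {(⟨0, hn⟩, ⟨0, hm⟩),
       (⟨n - 1, Nat.sub_lt hn one_pos⟩, ⟨0, hm⟩),
       (⟨n - 1, Nat.sub_lt hn one_pos⟩, ⟨m - 1, Nat.sub_lt hm one_pos⟩),
       (⟨0, hn⟩, ⟨m - 1, Nat.sub_lt hm one_pos⟩)} := by
    intro A B hAB
    by_contra hcon
    push_neg at hcon
    exact hAB (Stmt12Aux.resolve_key E F hne G' hG' hn hm hEF2 A B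
      (hcon _ (by simp)) (hcon _ (by simp)) (hcon _ (by simp)) (hcon _ (by simp)))
  refine ⟨hres, ?_⟩
  classical
  set FS : Finset (Fin n × Fin m) :=
      {(⟨0, hn⟩, ⟨0, hm⟩),
       (⟨n - 1, Nat.sub_lt hn one_pos⟩, ⟨0, hm⟩),
       (⟨n - 1, Nat.sub_lt hn one_pos⟩, ⟨m - 1, Nat.sub_lt hm one_pos⟩),
       (⟨0, hn⟩, ⟨m - 1, Nat.sub_lt hm one_pos⟩)} with hFS
  have hresF : resolves G' (FS : Set (Fin n × Fin m)) := by
    rw [hFS]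
    simpa using hres
  have hmem : metricDim G' ≤ FS.card := Nat.sInf_le ⟨FS, rfl, hresF⟩
  have hcard : FS.card ≤ 4 := by
    rw [hFS]
    refine le_trans (Finset.card_insert_le _ _) ?_
    have h2 : ({(⟨n - 1, Nat.sub_lt hn one_pos⟩, ⟨0, hm⟩),
       (⟨n - 1, Nat.sub_lt hn one_pos⟩, ⟨m - 1, Nat.sub_lt hm one_pos⟩),
       (⟨0, hn⟩, ⟨m - 1, Nat.sub_lt hm one_pos⟩)} : Finset (Fin n × Fin m)).card ≤ 3 := by
      refine le_trans (Finset.card_insert_le _ _) ?_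
      have h3 : ({(⟨n - 1, Nat.sub_lt hn one_pos⟩, ⟨m - 1, Nat.sub_lt hm one_pos⟩),
         (⟨0, hn⟩, ⟨m - 1, Nat.sub_lt hm one_pos⟩)} : Finset (Fin n × Fin m)).card ≤ 2 :=
        le_trans (Finset.card_insert_le _ _) (by simp)
      omega
    omega
  exact le_trans hmem hcard
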